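/- The measure with density 1/(1+xy)^2 on [0,1]×[-1,1] is invariant under the natural extension of the even Gauss map T̄_e(x,y) = (T_e(x), ε₁(x)/(a₁(x)+y)), where a₁(x) = 2k and ε₁(x) = +1 for x ∈ (1/(2k+1), 1/(2k)], ε₁(x) = -1 for x ∈ (1/(2k), 1/(2k-1)]. -/

import Mathlib

open MeasureTheory

/-- The natural extension of the even Gauss map on [0,1]×[-1,1]. -/
noncomputable def evenGaussNatExt (p : ℝ × ℝ) : ℝ × ℝ :=
  if p.1 = 0 then (0, p.2)
  else
    let a : ℝ := 2 * (round (1/(2*p.1)) : ℤ)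
    let e : ℝ := if 0 ≤ 1/p.1 - a then 1 else -1
    (e * (1/p.1 - a), e / (a + p.2))

/-- The measure with density 1/(1+xy)² on [0,1]×[-1,1]. -/
noncomputable def evenGaussMeasure : Measure (ℝ × ℝ) :=
  ((volume : Measure (ℝ × ℝ)).restrict (Set.Icc 0 1 ×ˢ Set.Icc (-1) 1)).withDensity
    (fun p => ENNReal.ofReal (1 / (1 + p.1 * p.2)^2))

def egM (i : ℕ × Bool) : ℕ := if i.2 then 2*i.1+2 else 2*i.1+1
def egA (i : ℕ × Bool) : ℝ := 2*i.1+2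
def egE (i : ℕ × Bool) : ℝ := if i.2 then 1 else -1
def egP (i : ℕ × Bool) : Set (ℝ × ℝ) :=
  Set.Ioc (1/((egM i : ℝ)+1)) (1/(egM i : ℝ)) ×ˢ Set.Icc (-1) 1
noncomputable def egF (i : ℕ × Bool) (p : ℝ × ℝ) : ℝ × ℝ :=
  (egE i * (1/p.1 - egA i), egE i / (egA i + p.2))

lemma egM_pos (i : ℕ × Bool) : (0:ℝ) < egM i := by
  rcases i with ⟨n, _ | _⟩ <;> simp [egM] <;> positivity

lemma egP_bounds {i : ℕ × Bool} {p : ℝ × ℝ} (hp : p ∈ egP i) :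
    0 < p.1 ∧ (egM i : ℝ) ≤ 1/p.1 ∧ 1/p.1 < (egM i : ℝ) + 1 ∧ -1 ≤ p.2 ∧ p.2 ≤ 1 := by
  obtain ⟨⟨h1, h2⟩, h3, h4⟩ := hp
  have hM : (0:ℝ) < egM i := egM_pos i
  have hx : 0 < p.1 := lt_trans (by positivity) h1
  refine ⟨hx, ?_, ?_, h3, h4⟩
  · rw [le_div_iff₀ hx]
    calc (egM i : ℝ) * p.1 ≤ (egM i : ℝ) * (1/(egM i:ℝ)) := by
          exact mul_le_mul_of_nonneg_left h2 hM.le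
      _ = 1 := by field_simp
  · rw [div_lt_iff₀ hx]
    have h1' : 1 < p.1 * ((egM i:ℝ)+1) := by
      have := (div_lt_iff₀ (by positivity : (0:ℝ) < (egM i:ℝ)+1)).mp h1
      linarith
    nlinarith

lemma egM_cast (i : ℕ × Bool) : (egM i : ℝ) = if i.2 then egA i else egA i - 1 := by
  rcases i with ⟨n, _ | _⟩ <;> simp [egM, egA] <;> push_cast <;> ring

lemma evenGaussNatExt_eqOn {i : ℕ × Bool} {p : ℝ × ℝ} (hp : p ∈ egP i) :
    evenGaussNatExt p = egF i p := by
  obtain ⟨hx, hl, hu, _, _⟩ := egP_bounds hp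
  have hxne : p.1 ≠ 0 := ne_of_gt hx
  have hMc := egM_cast i
  have hround : round (1/(2*p.1)) = (i.1 : ℤ) + 1 := by
    rw [round_eq, Int.floor_eq_iff]
    constructor
    · push_cast
      rcases i with ⟨n, _ | _⟩ <;>
      · simp only [egM, egA, Bool.cond_false, if_true, if_false] at hMc hl hu ⊢
        push_cast at hMc hl hu ⊢
        have : 1/(2*p.1) = (1/p.1)/2 := by ring
        rw [this]; nlinarith
    · push_cast
      rcases i with ⟨n, _ | _⟩ <;>
      · simp only [egM, egA, Bool.cond_false, if_true, if_false] at hMc hl hu ⊢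
        push_cast at hMc hl hu ⊢
        have : 1/(2*p.1) = (1/p.1)/2 := by ring
        rw [this]; nlinarith
  have ha : (2:ℝ) * ((round (1/(2*p.1)) : ℤ) : ℝ) = egA i := by
    rw [hround]; push_cast [egA]; ring
  have he : (if 0 ≤ 1/p.1 - egA i then (1:ℝ) else -1) = egE i := by
    rcases i with ⟨n, _ | _⟩
    · have hc : ¬ (0 ≤ 1/p.1 - egA (n, false)) := by
        simp only [egM] at hu; push_cast at hu; simp only [egA]; push_cast; nlinarith
      rw [if_neg hc]; simp [egE]
    · have hc : (0 ≤ 1/p.1 - egA (n, true)) := by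
        simp only [egM] at hl; push_cast at hl; simp only [egA]; push_cast; nlinarith
      rw [if_pos hc]; simp [egE]
  simp only [evenGaussNatExt, if_neg hxne, egF, ha, he]

noncomputable def egD (i : ℕ × Bool) (p : ℝ × ℝ) : ℝ × ℝ →L[ℝ] ℝ × ℝ :=
  ((1:ℝ→L[ℝ]ℝ).smulRight (egE i * (-(p.1^2)⁻¹))).prodMap
    ((1:ℝ→L[ℝ]ℝ).smulRight (egE i * (-1/(egA i + p.2)^2)))

lemma det_aux (c₁ c₂ : ℝ) :
    ((((1:ℝ→L[ℝ]ℝ).smulRight c₁).prodMap ((1:ℝ→L[ℝ]ℝ).smulRight c₂)).det) = c₁ * c₂ := by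
  have : (((1:ℝ→L[ℝ]ℝ).smulRight c₁).prodMap ((1:ℝ→L[ℝ]ℝ).smulRight c₂) : ℝ×ℝ →L[ℝ] ℝ×ℝ).det
      = LinearMap.det ((((1:ℝ→L[ℝ]ℝ).smulRight c₁).prodMap ((1:ℝ→L[ℝ]ℝ).smulRight c₂) : ℝ×ℝ →L[ℝ] ℝ×ℝ) : ℝ×ℝ →ₗ[ℝ] ℝ×ℝ) := rfl
  rw [this, ← LinearMap.det_toMatrix (Module.Basis.finTwoProd ℝ), Matrix.det_fin_two]
  simp [LinearMap.toMatrix_apply, Module.Basis.finTwoProd]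

lemma egE_sq (i : ℕ × Bool) : egE i * egE i = 1 := by
  rcases i with ⟨n, _ | _⟩ <;> simp [egE]

lemma egA_add_pos {i : ℕ × Bool} {y : ℝ} (hy : -1 ≤ y) : 0 < egA i + y := by
  have : (2:ℝ) ≤ egA i := by simp only [egA]; nlinarith [Nat.cast_nonneg (α := ℝ) i.1]
  linarith

lemma egD_det {i : ℕ × Bool} {p : ℝ × ℝ} (hp : p ∈ egP i) :
    (egD i p).det = 1/(p.1^2 * (egA i + p.2)^2) := by
  obtain ⟨hx, _, _, hy1, _⟩ := egP_bounds hp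
  have hay : 0 < egA i + p.2 := egA_add_pos hy1
  rw [egD, det_aux]
  have := egE_sq i
  field_simp
  ring_nf
  nlinarith [egE_sq i]

lemma egF_hasFDeriv {i : ℕ × Bool} {p : ℝ × ℝ} (hp : p ∈ egP i) :
    HasFDerivWithinAt (egF i) (egD i p) (egP i) p := by
  obtain ⟨hx, _, _, hy1, _⟩ := egP_bounds hp
  have hay : 0 < egA i + p.2 := egA_add_pos hy1
  have h1 : HasDerivAt (fun x : ℝ => egE i * (1/x - egA i)) (egE i * (-(p.1^2)⁻¹)) p.1 := by
    have := ((hasDerivAt_inv (ne_of_gt hx)).sub_const (egA i)).const_mul (egE i)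
    simpa [one_div] using this
  have h2 : HasDerivAt (fun y : ℝ => egE i / (egA i + y)) (egE i * (-1/(egA i + p.2)^2)) p.2 := by
    have hb : HasDerivAt (fun y : ℝ => egA i + y) 1 p.2 := (hasDerivAt_id p.2).const_add (egA i)
    have := (hb.inv (ne_of_gt hay)).const_mul (egE i)
    simpa [div_eq_mul_inv] using this
  have := (h1.hasFDerivAt.prodMap p h2.hasFDerivAt)
  have heq : egF i = Prod.map (fun x : ℝ => egE i * (1/x - egA i)) (fun y : ℝ => egE i / (egA i + y)) := by
    funext q; cases q; rfl
  rw [heq]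
  exact this.hasFDerivWithinAt

noncomputable def egDens (p : ℝ × ℝ) : ENNReal := ENNReal.ofReal (1 / (1 + p.1 * p.2)^2)

lemma eg_density_id {i : ℕ × Bool} {p : ℝ × ℝ} (hp : p ∈ egP i) :
    ENNReal.ofReal |(egD i p).det| * egDens (egF i p) = egDens p := by
  obtain ⟨hx, hl, hu, hy1, hy2⟩ := egP_bounds hp
  have hay : 0 < egA i + p.2 := egA_add_pos hy1
  have hMp : (0:ℝ) < egM i := egM_pos i
  have hdet : (egD i p).det = 1/(p.1^2 * (egA i + p.2)^2) := egD_det hp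
  have hdetpos : 0 < (egD i p).det := by rw [hdet]; positivity
  rw [hdet, abs_of_pos (hdet ▸ hdetpos), egDens, egDens, ← ENNReal.ofReal_mul (by positivity)]
  congr 1
  have he2 := egE_sq i
  have hxy : (egF i p).1 * (egF i p).2 = (1/p.1 - egA i) / (egA i + p.2) := by
    simp only [egF]
    have h9 : egE i * (1/p.1 - egA i) * (egE i / (egA i + p.2))
        = (egE i * egE i) * ((1/p.1 - egA i) / (egA i + p.2)) := by ring
    rw [h9, he2, one_mul]
  have hkey : 1 + (1/p.1 - egA i) / (egA i + p.2) = (1 + p.1 * p.2) * (p.1 * (egA i + p.2))⁻¹ := by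
    field_simp
    ring
  rw [hxy, hkey]
  have hxne := hx.ne'
  have hayne := hay.ne'
  rw [mul_pow (1 + p.1 * p.2), inv_pow,
    one_div ((1 + p.1 * p.2) ^ 2 * ((p.1 * (egA i + p.2)) ^ 2)⁻¹), mul_inv, inv_inv, mul_pow p.1]
  field_simp

lemma egE_ne (i : ℕ × Bool) : egE i ≠ 0 := by
  rcases i with ⟨n, _ | _⟩ <;> simp [egE]

lemma egF_injOn (i : ℕ × Bool) : Set.InjOn (egF i) (egP i) := by
  intro p hp q hq h
  obtain ⟨hxp, _, _, hyp1, _⟩ := egP_bounds hp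
  obtain ⟨hxq, _, _, hyq1, _⟩ := egP_bounds hq
  have hayp : 0 < egA i + p.2 := egA_add_pos hyp1
  have hayq : 0 < egA i + q.2 := egA_add_pos hyq1
  have he := egE_ne i
  obtain ⟨h1, h2⟩ := Prod.mk.injEq .. ▸ h
  have hx : p.1 = q.1 := by
    have : 1/p.1 = 1/q.1 := by
      have := mul_left_cancel₀ he h1
      linarith
    field_simp at this
    linarith
  have hy : p.2 = q.2 := by
    simp only [div_eq_div_iff (ne_of_gt hayp) (ne_of_gt hayq)] at h2
    have h3 : egA i + q.2 = egA i + p.2 := mul_left_cancel₀ he h2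
    linarith
  exact Prod.ext hx hy

lemma img1 {a : ℝ} (ha : 2 ≤ a) :
    (fun x : ℝ => 1/x - a) '' Set.Ioc (1/(a+1)) (1/a) = Set.Ico 0 1 := by
  have ha0 : 0 < a := by linarith
  have ha1 : 0 < a + 1 := by linarith
  ext t
  constructor
  · rintro ⟨x, ⟨h1, h2⟩, rfl⟩
    have hx : 0 < x := lt_trans (by positivity) h1
    have hl : a ≤ 1/x := by
      rw [le_div_iff₀ hx]
      have h3 := mul_le_mul_of_nonneg_left h2 ha0.le
      rw [mul_one_div, div_self ha0.ne'] at h3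
      linarith
    have hu : 1/x < a + 1 := by
      rw [div_lt_iff₀ hx]
      have h3 := (div_lt_iff₀ ha1).mp h1
      nlinarith
    constructor <;> dsimp only <;> linarith
  · rintro ⟨h0, h1⟩
    refine ⟨1/(a+t), ⟨?_, ?_⟩, ?_⟩
    · exact one_div_lt_one_div_of_lt (by linarith) (by linarith)
    · exact one_div_le_one_div_of_le ha0 (by linarith)
    · dsimp only; rw [one_div_one_div]; ring

lemma img2 {a : ℝ} (ha : 2 ≤ a) :
    (fun y : ℝ => 1/(a+y)) '' Set.Icc (-1) 1 = Set.Icc (1/(a+1)) (1/(a-1)) := by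
  have ha0 : (0:ℝ) < a - 1 := by linarith
  ext t
  constructor
  · rintro ⟨y, ⟨h1, h2⟩, rfl⟩
    constructor
    · exact one_div_le_one_div_of_le (by linarith) (by linarith)
    · exact one_div_le_one_div_of_le (by linarith) (by linarith)
  · rintro ⟨h0, h1⟩
    have ht : 0 < t := lt_of_lt_of_le (by positivity) h0
    refine ⟨1/t - a, ⟨?_, ?_⟩, ?_⟩
    · have := one_div_le_one_div_of_le ht h1
      rw [one_div_one_div] at this
      linarith
    · have := one_div_le_one_div_of_le (by positivity) h0
      rw [one_div_one_div] at this
      linarith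
    · dsimp only
      have h9 : a + (1/t - a) = 1/t := by ring
      rw [h9, one_div_one_div]

lemma img3 {a : ℝ} (ha : 2 ≤ a) :
    (fun x : ℝ => -1 * (1/x - a)) '' Set.Ioc (1/a) (1/(a-1)) = Set.Ioc 0 1 := by
  have ha0 : 0 < a := by linarith
  have ha1 : (0:ℝ) < a - 1 := by linarith
  ext t
  constructor
  · rintro ⟨x, ⟨h1, h2⟩, rfl⟩
    have hx : 0 < x := lt_trans (by positivity) h1
    have hl : a - 1 ≤ 1/x := by
      rw [le_div_iff₀ hx]
      have h3 := mul_le_mul_of_nonneg_left h2 ha1.le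
      rw [mul_one_div, div_self ha1.ne'] at h3
      linarith
    have hu : 1/x < a := by
      rw [div_lt_iff₀ hx]
      have h3 := (div_lt_iff₀ ha0).mp h1
      nlinarith
    constructor <;> dsimp only <;> linarith
  · rintro ⟨h0, h1⟩
    refine ⟨1/(a-t), ⟨?_, ?_⟩, ?_⟩
    · exact one_div_lt_one_div_of_lt (by linarith) (by linarith)
    · exact one_div_le_one_div_of_le (by linarith) (by linarith)
    · dsimp only; rw [one_div_one_div]; ring

lemma img4 {a : ℝ} (ha : 2 ≤ a) :
    (fun y : ℝ => -1/(a+y)) '' Set.Icc (-1) 1 = Set.Icc (-(1/(a-1))) (-(1/(a+1))) := by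
  have h2 := img2 ha
  have hcomp : (fun y : ℝ => -1/(a+y)) = (fun s : ℝ => -s) ∘ (fun y : ℝ => 1/(a+y)) := by
    funext y; simp [neg_div]
  rw [hcomp, Set.image_comp, h2]
  rw [show (fun s : ℝ => -s) = Neg.neg from rfl]
  rw [Set.image_neg_Icc]

lemma egA_ge (i : ℕ × Bool) : 2 ≤ egA i := by
  simp only [egA]; nlinarith [Nat.cast_nonneg (α := ℝ) i.1]

lemma egF_image (i : ℕ × Bool) : egF i '' egP i =
    (if i.2 then Set.Ico 0 1 ×ˢ Set.Icc (1/(egA i+1)) (1/(egA i-1))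
     else Set.Ioc 0 1 ×ˢ Set.Icc (-(1/(egA i-1))) (-(1/(egA i+1)))) := by
  have ha := egA_ge i
  rcases i with ⟨n, _ | _⟩
  · have hM : ((egM (n,false) : ℝ)) = egA (n,false) - 1 := by rw [egM_cast]; simp
    have hE : egE (n,false) = -1 := by simp [egE]
    have e1 : (1:ℝ)/((egM (n,false):ℝ)+1) = 1/(egA (n,false)) := by rw [hM]; ring_nf
    have e2 : (1:ℝ)/((egM (n,false):ℝ)) = 1/(egA (n,false)-1) := by rw [hM]
    have hfun : egF (n,false) = fun p : ℝ×ℝ =>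
        ((fun x => -1 * (1/x - egA (n,false))) p.1, (fun y => -1/(egA (n,false)+y)) p.2) := by
      funext p; simp only [egF, hE]
    rw [if_neg (by simp)]
    rw [egP, e1, e2, hfun]
    refine Eq.trans (Set.prod_image_image_eq
      (m₁ := fun x => -1 * (1/x - egA (n,false))) (m₂ := fun y => -1/(egA (n,false)+y))).symm ?_
    rw [img3 ha, img4 ha]
  · have hM : ((egM (n,true) : ℝ)) = egA (n,true) := by rw [egM_cast]; simp
    have hE : egE (n,true) = 1 := by simp [egE]
    have e1 : (1:ℝ)/((egM (n,true):ℝ)+1) = 1/(egA (n,true)+1) := by rw [hM]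
    have e2 : (1:ℝ)/((egM (n,true):ℝ)) = 1/(egA (n,true)) := by rw [hM]
    have hfun : egF (n,true) = fun p : ℝ×ℝ =>
        ((fun x => 1/x - egA (n,true)) p.1, (fun y => 1/(egA (n,true)+y)) p.2) := by
      funext p; simp only [egF, hE]; rw [one_mul]
    rw [if_pos (by simp)]
    rw [egP, e1, e2, hfun]
    refine Eq.trans (Set.prod_image_image_eq
      (m₁ := fun x => 1/x - egA (n,true)) (m₂ := fun y => 1/(egA (n,true)+y))).symm ?_
    rw [img1 ha, img2 ha]

def egQ (i : ℕ × Bool) : Set (ℝ × ℝ) :=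
  if i.2 then Set.Ico 0 1 ×ˢ Set.Ioc (1/(egA i+1)) (1/(egA i-1))
  else Set.Ioc 0 1 ×ˢ Set.Ioc (-(1/(egA i-1))) (-(1/(egA i+1)))

lemma null_fst (c : ℝ) : (volume : Measure (ℝ × ℝ)) {p : ℝ × ℝ | p.1 = c} = 0 := by
  have h : {p : ℝ × ℝ | p.1 = c} = ({c} : Set ℝ) ×ˢ (Set.univ : Set ℝ) := by
    ext p
    constructor
    · intro hp; exact ⟨hp, trivial⟩
    · rintro ⟨h1, -⟩; exact h1
  rw [h, Measure.volume_eq_prod, Measure.prod_prod]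
  simp

lemma null_snd (c : ℝ) : (volume : Measure (ℝ × ℝ)) {p : ℝ × ℝ | p.2 = c} = 0 := by
  have h : {p : ℝ × ℝ | p.2 = c} = (Set.univ : Set ℝ) ×ˢ ({c} : Set ℝ) := by
    ext p
    constructor
    · intro hp; exact ⟨trivial, hp⟩
    · rintro ⟨-, h1⟩; exact h1
  rw [h, Measure.volume_eq_prod, Measure.prod_prod]
  simp

lemma egQ_mem_y {i : ℕ × Bool} {p : ℝ × ℝ} (hp : p ∈ egQ i) :
    (i.2 = true → 1/(egA i+1) < p.2 ∧ p.2 ≤ 1/(egA i-1)) ∧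
    (i.2 = false → -(1/(egA i-1)) < p.2 ∧ p.2 ≤ -(1/(egA i+1))) := by
  rcases i with ⟨n, _ | _⟩
  · rw [egQ, if_neg (by simp)] at hp
    exact ⟨by simp, fun _ => hp.2⟩
  · rw [egQ, if_pos (by simp)] at hp
    exact ⟨fun _ => hp.2, by simp⟩

lemma egA_lt_of_lt {n m : ℕ} (h : n < m) (b c : Bool) : egA (n, b) + 1 ≤ egA (m, c) - 1 := by
  simp only [egA]
  have : (n : ℝ) + 1 ≤ m := by exact_mod_cast h
  nlinarith

lemma egQ_disjoint : Pairwise (Function.onFun Disjoint egQ) := by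
  intro i j hij
  rw [Function.onFun, Set.disjoint_left]
  intro p hpi hpj
  have hyi := egQ_mem_y hpi
  have hyj := egQ_mem_y hpj
  have hAi := egA_ge i
  have hAj := egA_ge j
  rcases i with ⟨n, _ | _⟩ <;> rcases j with ⟨m, _ | _⟩
  · -- false false
    have hnm : n ≠ m := by intro h; exact hij (by rw [h])
    obtain ⟨h1, h2⟩ := hyi.2 rfl
    obtain ⟨h3, h4⟩ := hyj.2 rfl
    rcases lt_or_gt_of_ne hnm with h | h
    · have := egA_lt_of_lt h false false
      have h5 : 1/(egA (m,false)-1) ≤ 1/(egA (n,false)+1) :=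
        one_div_le_one_div_of_le (by linarith) (by linarith)
      linarith
    · have := egA_lt_of_lt h false false
      have h5 : 1/(egA (n,false)-1) ≤ 1/(egA (m,false)+1) :=
        one_div_le_one_div_of_le (by linarith) (by linarith)
      linarith
  · -- i false, j true
    obtain ⟨h1, h2⟩ := hyi.2 rfl
    obtain ⟨h3, h4⟩ := hyj.1 rfl
    have hp1 : (0:ℝ) < 1/(egA (n,false)+1) := by positivity
    have hp2 : (0:ℝ) < 1/(egA (m,true)+1) := by positivity
    linarith
  · obtain ⟨h1, h2⟩ := hyi.1 rfl
    obtain ⟨h3, h4⟩ := hyj.2 rfl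
    have hp1 : (0:ℝ) < 1/(egA (n,true)+1) := by positivity
    have hp2 : (0:ℝ) < 1/(egA (m,false)+1) := by positivity
    linarith
  · -- true true
    have hnm : n ≠ m := by intro h; exact hij (by rw [h])
    obtain ⟨h1, h2⟩ := hyi.1 rfl
    obtain ⟨h3, h4⟩ := hyj.1 rfl
    rcases lt_or_gt_of_ne hnm with h | h
    · have := egA_lt_of_lt h true true
      have h5 : 1/(egA (m,true)-1) ≤ 1/(egA (n,true)+1) :=
        one_div_le_one_div_of_le (by linarith) (by linarith)
      linarith
    · have := egA_lt_of_lt h true true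
      have h5 : 1/(egA (n,true)-1) ≤ 1/(egA (m,true)+1) :=
        one_div_le_one_div_of_le (by linarith) (by linarith)
      linarith

lemma egM_one_le (i : ℕ × Bool) : (1:ℝ) ≤ (egM i : ℝ) := by
  have : 1 ≤ egM i := by rcases i with ⟨n, _ | _⟩ <;> simp [egM] <;> omega
  exact_mod_cast this

lemma egM_inj : Function.Injective egM := by
  rintro ⟨n, _ | _⟩ ⟨m, _ | _⟩ h <;> simp only [egM, Bool.false_eq_true, if_true, if_false] at h
  · have : n = m := by omega
    rw [this]
  · exact absurd h (by omega)
  · exact absurd h (by omega)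
  · have : n = m := by omega
    rw [this]

lemma egP_disjoint : Pairwise (Function.onFun Disjoint egP) := by
  intro i j hij
  rw [Function.onFun, Set.disjoint_left]
  intro p hpi hpj
  obtain ⟨hx, hl1, hu1, -, -⟩ := egP_bounds hpi
  obtain ⟨-, hl2, hu2, -, -⟩ := egP_bounds hpj
  have h1 : (egM i : ℝ) < (egM j : ℝ) + 1 := lt_of_le_of_lt hl1 hu2
  have h2 : (egM j : ℝ) < (egM i : ℝ) + 1 := lt_of_le_of_lt hl2 hu1
  have h3 : egM i < egM j + 1 := by exact_mod_cast h1
  have h4 : egM j < egM i + 1 := by exact_mod_cast h2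
  exact hij (egM_inj (by omega))

lemma exists_egM {M : ℕ} (hM : 1 ≤ M) : ∃ i, egM i = M := by
  rcases Nat.even_or_odd M with ⟨k, hk⟩ | ⟨k, hk⟩
  · exact ⟨(k-1, true), by simp [egM]; omega⟩
  · exact ⟨(k, false), by simp [egM]; omega⟩

lemma egP_union : (⋃ i, egP i) = Set.Ioc 0 1 ×ˢ Set.Icc (-1) 1 := by
  ext p
  simp only [Set.mem_iUnion]
  constructor
  · rintro ⟨i, hpi⟩
    obtain ⟨hx, hl, hu, hy1, hy2⟩ := egP_bounds hpi
    have hM1 := egM_one_le i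
    refine ⟨⟨hx, ?_⟩, hy1, hy2⟩
    have h1 : (1:ℝ) ≤ 1/p.1 := le_trans hM1 hl
    rw [le_div_iff₀ hx] at h1; linarith
  · rintro ⟨⟨hx0, hx1⟩, hy⟩
    have ht1 : (1:ℝ) ≤ 1/p.1 := by rw [le_div_iff₀ hx0]; linarith
    set M := ⌊1/p.1⌋₊ with hMdef
    have hM1 : 1 ≤ M := Nat.le_floor (by exact_mod_cast ht1)
    have hMl : (M:ℝ) ≤ 1/p.1 := Nat.floor_le (by positivity)
    have hMu : 1/p.1 < (M:ℝ) + 1 := Nat.lt_floor_add_one _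
    obtain ⟨i, hi⟩ := exists_egM hM1
    refine ⟨i, ⟨⟨?_, ?_⟩, hy⟩⟩
    · rw [hi]
      rw [div_lt_iff₀ (by positivity)]
      rw [div_lt_iff₀ hx0] at hMu
      linarith
    · rw [hi]
      rw [le_div_iff₀ (by exact_mod_cast hM1 : (0:ℝ) < (M:ℝ))]
      rw [le_div_iff₀ hx0] at hMl
      linarith

lemma egQ_subset_R (i : ℕ × Bool) : egQ i ⊆ Set.Icc 0 1 ×ˢ Set.Icc (-1) 1 := by
  have ha := egA_ge i
  have h1 : (0:ℝ) < egA i - 1 := by linarith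
  rcases i with ⟨n, _ | _⟩
  · rw [egQ, if_neg (by simp)]
    rintro p ⟨⟨hx0, hx1⟩, hy1, hy2⟩
    have hp1 : (0:ℝ) < 1/(egA (n,false)+1) := by positivity
    have hp2 : 1/(egA (n,false)-1) ≤ 1 := by
      rw [div_le_one (by linarith)]; linarith
    exact ⟨⟨hx0.le, hx1⟩, by constructor <;> linarith⟩
  · rw [egQ, if_pos (by simp)]
    rintro p ⟨⟨hx0, hx1⟩, hy1, hy2⟩
    have hp1 : (0:ℝ) < 1/(egA (n,true)+1) := by positivity
    have hp2 : 1/(egA (n,true)-1) ≤ 1 := by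
      rw [div_le_one (by linarith)]; linarith
    exact ⟨⟨hx0, hx1.le⟩, by constructor <;> linarith⟩

lemma egQ_cover :
    (Set.Icc 0 1 ×ˢ Set.Icc (-1) 1 : Set (ℝ × ℝ)) \ (⋃ i, egQ i) ⊆
      {p : ℝ × ℝ | p.1 = 0} ∪ {p | p.1 = 1} ∪ {p | p.2 = 0} ∪ {p | p.2 = -1} := by
  rintro ⟨x, y⟩ ⟨⟨⟨hx0, hx1⟩, hy1, hy2⟩, hnot⟩
  simp only [Set.mem_iUnion, not_exists] at hnot
  by_contra hbad
  simp only [Set.mem_union, Set.mem_setOf_eq, not_or] at hbad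
  obtain ⟨⟨⟨hxne0, hxne1⟩, hyne0⟩, hynem1⟩ := hbad
  have hx0' : 0 < x := lt_of_le_of_ne hx0 (Ne.symm hxne0)
  have hx1' : x < 1 := lt_of_le_of_ne hx1 hxne1
  rcases lt_or_gt_of_ne hyne0 with hy | hy
  · -- y < 0
    have hym1 : -1 < y := lt_of_le_of_ne hy1 (Ne.symm hynem1)
    set s : ℝ := -y with hs
    have hs0 : 0 < s := by simp [hs]; linarith
    have hs1 : s < 1 := by simp [hs]; linarith
    set t : ℝ := 1/s with ht
    have ht1 : 1 < t := by rw [ht, lt_div_iff₀ hs0]; linarith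
    set n : ℕ := ⌈(t-3)/2⌉₊ with hn
    have hcond : 2*(n:ℝ)+1 < t ∧ t ≤ 2*(n:ℝ)+3 := by
      rcases le_or_gt t 3 with h3 | h3
      · have : n = 0 := by
          rw [hn, Nat.ceil_eq_zero]; linarith
        rw [this]; push_cast; constructor <;> linarith
      · have hr0 : (0:ℝ) ≤ (t-3)/2 := by linarith
        have hle : (t-3)/2 ≤ n := Nat.le_ceil _
        have hlt : (n:ℝ) < (t-3)/2 + 1 := by
          have := Nat.ceil_lt_add_one hr0
          exact_mod_cast this
        constructor <;> linarith
      
    apply hnot (n, false)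
    rw [egQ, if_neg (by simp)]
    have hA : egA (n, false) = 2*(n:ℝ)+2 := by simp [egA]
    refine ⟨⟨hx0', hx1'.le⟩, ?_, ?_⟩
    · dsimp only
      rw [hA]
      have h1 : 1/t < 1/(2*(n:ℝ)+1) :=
        one_div_lt_one_div_of_lt (by positivity) hcond.1
      have h2 : (1:ℝ)/t = s := by rw [ht, one_div_one_div]
      have : -(1/(2*(n:ℝ)+2-1)) < -s := by rw [show (2*(n:ℝ)+2-1) = 2*(n:ℝ)+1 by ring]; linarith
      simpa [hs] using this
    · dsimp only
      rw [hA]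
      have h1 : 1/(2*(n:ℝ)+3) ≤ 1/t :=
        one_div_le_one_div_of_le (by linarith) hcond.2
      have h2 : (1:ℝ)/t = s := by rw [ht, one_div_one_div]
      have : -s ≤ -(1/(2*(n:ℝ)+2+1)) := by rw [show (2*(n:ℝ)+2+1) = 2*(n:ℝ)+3 by ring]; linarith
      simpa [hs] using this
  · -- y > 0
    set t : ℝ := 1/y with ht
    have ht1 : 1 ≤ t := by rw [ht, le_div_iff₀ hy]; linarith
    set n : ℕ := ⌊(t-1)/2⌋₊ with hn
    have hr0 : (0:ℝ) ≤ (t-1)/2 := by linarith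
    have hle : (n:ℝ) ≤ (t-1)/2 := Nat.floor_le hr0
    have hlt : (t-1)/2 < (n:ℝ) + 1 := Nat.lt_floor_add_one _
    have hcond : 2*(n:ℝ)+1 ≤ t ∧ t < 2*(n:ℝ)+3 := by constructor <;> linarith
    apply hnot (n, true)
    rw [egQ, if_pos (by simp)]
    have hA : egA (n, true) = 2*(n:ℝ)+2 := by simp [egA]
    refine ⟨⟨hx0'.le, hx1'⟩, ?_, ?_⟩
    · dsimp only
      rw [hA]
      have h1 : 1/(2*(n:ℝ)+3) < 1/t :=
        one_div_lt_one_div_of_lt (by positivity) hcond.2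
      have h2 : (1:ℝ)/t = y := by rw [ht, one_div_one_div]
      rw [show (2*(n:ℝ)+2+1) = 2*(n:ℝ)+3 by ring]; linarith
    · dsimp only
      rw [hA]
      have h1 : 1/t ≤ 1/(2*(n:ℝ)+1) :=
        one_div_le_one_div_of_le (by positivity) hcond.1
      have h2 : (1:ℝ)/t = y := by rw [ht, one_div_one_div]
      rw [show (2*(n:ℝ)+2-1) = 2*(n:ℝ)+1 by ring]; linarith

lemma egQ_subset_image (i : ℕ × Bool) : egQ i ⊆ egF i '' egP i := by
  rw [egF_image]
  rcases i with ⟨n, _ | _⟩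
  · rw [egQ, if_neg (by simp), if_neg (by simp)]
    exact Set.prod_mono (subset_refl _) Set.Ioc_subset_Icc_self
  · rw [egQ, if_pos (by simp), if_pos (by simp)]
    exact Set.prod_mono (subset_refl _) Set.Ioc_subset_Icc_self

lemma image_diff_egQ (i : ℕ × Bool) : (egF i '' egP i) \ egQ i ⊆
    {p : ℝ × ℝ | p.2 = 1/(egA i+1)} ∪ {p | p.2 = -(1/(egA i-1))} := by
  rw [egF_image]
  rcases i with ⟨n, _ | _⟩
  · rw [egQ, if_neg (by simp), if_neg (by simp)]
    rintro p ⟨⟨hx, hy1, hy2⟩, hn⟩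
    right
    simp only [Set.mem_setOf_eq]
    by_contra hne
    exact hn ⟨hx, lt_of_le_of_ne hy1 (Ne.symm hne), hy2⟩
  · rw [egQ, if_pos (by simp), if_pos (by simp)]
    rintro p ⟨⟨hx, hy1, hy2⟩, hn⟩
    left
    simp only [Set.mem_setOf_eq]
    by_contra hne
    exact hn ⟨hx, lt_of_le_of_ne hy1 (Ne.symm hne), hy2⟩

lemma egP_meas (i : ℕ × Bool) : MeasurableSet (egP i) :=
  measurableSet_Ioc.prod measurableSet_Icc

lemma egQ_meas (i : ℕ × Bool) : MeasurableSet (egQ i) := by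
  rcases i with ⟨n, _ | _⟩
  · rw [egQ, if_neg (by simp)]; exact measurableSet_Ioc.prod measurableSet_Ioc
  · rw [egQ, if_pos (by simp)]; exact measurableSet_Ico.prod measurableSet_Ioc

lemma measurable_round_real : Measurable (round : ℝ → ℤ) := by
  have h : (round : ℝ → ℤ) = fun x => ⌊x + 1/2⌋ := funext round_eq
  rw [h]
  exact Int.measurable_floor.comp (measurable_id.add_const _)

lemma evenGaussNatExt_measurable : Measurable evenGaussNatExt := by
  have h1x : Measurable (fun p : ℝ × ℝ => 1/p.1) := by
    have : (fun p : ℝ × ℝ => 1/p.1) = fun p => (p.1)⁻¹ := by funext p; rw [one_div]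
    rw [this]; exact measurable_fst.inv
  have ha : Measurable (fun p : ℝ × ℝ => 2 * ((round (1/(2*p.1)) : ℤ) : ℝ)) := by
    have h2 : Measurable (fun p : ℝ × ℝ => 1/(2*p.1)) := by
      have : (fun p : ℝ × ℝ => 1/(2*p.1)) = fun p => (2*p.1)⁻¹ := by funext p; rw [one_div]
      rw [this]; exact (measurable_fst.const_mul 2).inv
    exact ((measurable_from_top.comp (measurable_round_real.comp h2)).const_mul 2)
  have he : Measurable (fun p : ℝ × ℝ =>
      if 0 ≤ 1/p.1 - 2 * ((round (1/(2*p.1)) : ℤ) : ℝ) then (1:ℝ) else -1) := by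
    exact Measurable.ite (measurableSet_le measurable_const (h1x.sub ha))
      measurable_const measurable_const
  unfold evenGaussNatExt
  apply Measurable.ite (measurable_fst (measurableSet_singleton 0))
    (measurable_const.prodMk measurable_snd)
  exact (he.mul (h1x.sub ha)).prodMk (he.div (ha.add measurable_snd))

lemma egQ_image_ae (i : ℕ × Bool) : (egF i '' egP i : Set (ℝ×ℝ)) =ᵐ[volume] egQ i := by
  rw [MeasureTheory.ae_eq_set]
  constructor
  · refine measure_mono_null (image_diff_egQ i) ?_
    exact measure_union_null (null_snd _) (null_snd _)
  · rw [Set.diff_eq_empty.mpr (egQ_subset_image i)]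
    exact measure_empty

lemma eg_key (A : Set (ℝ × ℝ)) (hA : MeasurableSet A) (i : ℕ × Bool) :
    ∫⁻ p in (evenGaussNatExt ⁻¹' A) ∩ egP i, egDens p
      = ∫⁻ p in A ∩ egQ i, egDens p := by
  have hTA : MeasurableSet (evenGaussNatExt ⁻¹' A) := evenGaussNatExt_measurable hA
  have hg : ∀ x ∈ egP i, ENNReal.ofReal |(egD i x).det| * (A.indicator egDens) (egF i x)
      = ((evenGaussNatExt ⁻¹' A).indicator egDens) x := by
    intro x hx
    by_cases hmem : egF i x ∈ A
    · rw [Set.indicator_of_mem hmem,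
        Set.indicator_of_mem (show x ∈ evenGaussNatExt ⁻¹' A by
          rw [Set.mem_preimage, evenGaussNatExt_eqOn hx]; exact hmem)]
      exact eg_density_id hx
    · rw [Set.indicator_of_notMem hmem,
        Set.indicator_of_notMem (show x ∉ evenGaussNatExt ⁻¹' A by
          rw [Set.mem_preimage, evenGaussNatExt_eqOn hx]; exact hmem)]
      simp
  have cov := lintegral_image_eq_lintegral_abs_det_fderiv_mul volume (egP_meas i)
      (fun x hx => egF_hasFDeriv hx) (egF_injOn i) (A.indicator egDens)
  have r1 : ∫⁻ x in egP i, ENNReal.ofReal |(egD i x).det| * (A.indicator egDens) (egF i x) ∂volume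
      = ∫⁻ x in egP i, ((evenGaussNatExt ⁻¹' A).indicator egDens) x ∂volume :=
    setLIntegral_congr_fun (egP_meas i) hg
  have r2 : ∫⁻ x in egP i, ((evenGaussNatExt ⁻¹' A).indicator egDens) x ∂volume
      = ∫⁻ x in (evenGaussNatExt ⁻¹' A) ∩ egP i, egDens x ∂volume := by
    rw [lintegral_indicator hTA, Measure.restrict_restrict hTA]
  have l1 : ∫⁻ x in egF i '' egP i, (A.indicator egDens) x ∂volume
      = ∫⁻ x in egQ i, (A.indicator egDens) x ∂volume :=
    setLIntegral_congr (egQ_image_ae i)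
  have l2 : ∫⁻ x in egQ i, (A.indicator egDens) x ∂volume
      = ∫⁻ x in A ∩ egQ i, egDens x ∂volume := by
    rw [lintegral_indicator hA, Measure.restrict_restrict hA]
  rw [← r2, ← r1, ← cov, l1, l2]

theorem evenGaussNatExt_invariant :
    ∀ A : Set (ℝ × ℝ), MeasurableSet A →
      evenGaussMeasure (evenGaussNatExt ⁻¹' A) = evenGaussMeasure A := by
  intro A hA
  have hTA : MeasurableSet (evenGaussNatExt ⁻¹' A) := evenGaussNatExt_measurable hA
  set R : Set (ℝ × ℝ) := Set.Icc 0 1 ×ˢ Set.Icc (-1) 1 with hRdef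
  have hμ : ∀ S : Set (ℝ × ℝ), MeasurableSet S →
      evenGaussMeasure S = ∫⁻ p in S ∩ R, egDens p ∂volume := by
    intro S hS
    rw [evenGaussMeasure, withDensity_apply _ hS, Measure.restrict_restrict hS]
    rfl
  rw [hμ _ hTA, hμ _ hA]
  have hPae : R =ᵐ[volume] (⋃ i, egP i) := by
    rw [MeasureTheory.ae_eq_set]
    constructor
    · refine measure_mono_null ?_ (null_fst 0)
      rw [egP_union]
      rintro ⟨x, y⟩ ⟨⟨⟨hx0, hx1⟩, hy⟩, hn⟩
      simp only [Set.mem_setOf_eq]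
      by_contra h
      exact hn ⟨⟨lt_of_le_of_ne hx0 (Ne.symm h), hx1⟩, hy⟩
    · rw [Set.diff_eq_empty.mpr]
      · exact measure_empty
      · rw [egP_union]
        exact Set.prod_mono Set.Ioc_subset_Icc_self (subset_refl _)
  have hQae : (⋃ i, egQ i) =ᵐ[volume] R := by
    rw [MeasureTheory.ae_eq_set]
    constructor
    · rw [Set.diff_eq_empty.mpr (Set.iUnion_subset egQ_subset_R)]
      exact measure_empty
    · refine measure_mono_null egQ_cover ?_
      exact measure_union_null (measure_union_null
        (measure_union_null (null_fst 0) (null_fst 1)) (null_snd 0)) (null_snd (-1))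
  calc ∫⁻ p in (evenGaussNatExt ⁻¹' A) ∩ R, egDens p ∂volume
      = ∫⁻ p in (evenGaussNatExt ⁻¹' A) ∩ ⋃ i, egP i, egDens p ∂volume :=
        setLIntegral_congr (Filter.EventuallyEq.refl _ _ |>.inter hPae)
    _ = ∫⁻ p in ⋃ i, (evenGaussNatExt ⁻¹' A) ∩ egP i, egDens p ∂volume := by
        rw [Set.inter_iUnion]
    _ = ∑' i, ∫⁻ p in (evenGaussNatExt ⁻¹' A) ∩ egP i, egDens p ∂volume :=
        lintegral_iUnion (fun i => hTA.inter (egP_meas i))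
          (fun i j hij => (egP_disjoint hij).mono Set.inter_subset_right Set.inter_subset_right) _
    _ = ∑' i, ∫⁻ p in A ∩ egQ i, egDens p ∂volume := tsum_congr (eg_key A hA)
    _ = ∫⁻ p in ⋃ i, A ∩ egQ i, egDens p ∂volume :=
        (lintegral_iUnion (fun i => hA.inter (egQ_meas i))
          (fun i j hij => (egQ_disjoint hij).mono Set.inter_subset_right Set.inter_subset_right) _).symm
    _ = ∫⁻ p in A ∩ ⋃ i, egQ i, egDens p ∂volume := by rw [Set.inter_iUnion]
    _ = ∫⁻ p in A ∩ R, egDens p ∂volume :=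
        setLIntegral_congr (Filter.EventuallyEq.refl _ _ |>.inter hQae)
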